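/- Let m ≥ 2, let (Ω, μ) be a probability space, let v_1, ..., v_m : Ω → ℝ^n be integrable measurable maps with means w_i = E[v_i] satisfying E[‖v_i − w_i‖₂²] ≤ δ² for every i ∈ [m], and let g : Ω → ℝ^n be integrable with mean w_0 = E[g] satisfying E[‖g − w_0‖₂²] ≤ δ₀², where δ, δ₀ ≥ 0. Let C_f, C_g ≥ 0, μ₀ ≥ 0, λ ∈ Δ^m, and d ∈ ℝ^n with ‖d‖₂² ≤ 2C_f² + 2μ₀²C_g². Then 2(C_f² + μ₀²C_g²) · E[‖Σ_{i=1}^m λ_i (v_i − w_i) + μ₀ (g − w_0)‖₂²] + 2·ln(m) · E[max_{i ∈ [m]} ⟨v_i − w_i, d⟩²] ≤ 4 (C_f² + μ₀²C_g²) ( δ² + μ₀² δ₀² + m δ² ln m ). -/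
import Mathlib


open scoped RealInnerProductSpace
open MeasureTheory

set_option maxHeartbeats 1600000 in
/-- Bound on the squared dual norm of the deviation between the stochastic and full
gradients of the preference-regularized MGDA saddle-point subproblem: with means
`w i = E[v i]`, `w₀ = E[g]`, variance bounds `E‖v i - w i‖² ≤ δ²`, `E‖g - w₀‖² ≤ δ₀²`,
`λ ∈ Δ^m` and `‖d‖² ≤ 2C_f² + 2μ₀²C_g²`, one has
`2(C_f² + μ₀²C_g²)·E‖Σ_i λ_i (v_i - w_i) + μ₀(g - w₀)‖² + 2 ln m · E[max_i ⟨v_i - w_i, d⟩²]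
  ≤ 4(C_f² + μ₀²C_g²)(δ² + μ₀²δ₀² + m δ² ln m)`. -/
theorem preference_stochastic_gradient_variance_dual_norm_bound
    {n m : ℕ} (hm : 2 ≤ m)
    {Ω : Type*} [MeasurableSpace Ω] (μ : Measure Ω) [IsProbabilityMeasure μ]
    (v : Fin m → Ω → EuclideanSpace ℝ (Fin n))
    (hmeas : ∀ i, Measurable (v i))
    (hvint : ∀ i, Integrable (v i) μ)
    (w : Fin m → EuclideanSpace ℝ (Fin n))
    (hw : ∀ i, w i = ∫ ω, v i ω ∂μ)
    (δ : ℝ) (hδ : 0 ≤ δ)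
    (hvar_int : ∀ i, Integrable (fun ω => ‖v i ω - w i‖ ^ 2) μ)
    (hvar : ∀ i, ∫ ω, ‖v i ω - w i‖ ^ 2 ∂μ ≤ δ ^ 2)
    (g : Ω → EuclideanSpace ℝ (Fin n)) (hgmeas : Measurable g)
    (hgint : Integrable g μ)
    (w₀ : EuclideanSpace ℝ (Fin n)) (hw₀ : w₀ = ∫ ω, g ω ∂μ)
    (δ₀ : ℝ) (hδ₀ : 0 ≤ δ₀)
    (hgvar_int : Integrable (fun ω => ‖g ω - w₀‖ ^ 2) μ)
    (hgvar : ∫ ω, ‖g ω - w₀‖ ^ 2 ∂μ ≤ δ₀ ^ 2)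
    (Cf Cg : ℝ) (hCf : 0 ≤ Cf) (hCg : 0 ≤ Cg)
    (μ₀ : ℝ) (hμ₀ : 0 ≤ μ₀)
    (lam : Fin m → ℝ) (hlam : lam ∈ stdSimplex ℝ (Fin m))
    (d : EuclideanSpace ℝ (Fin n)) (hd : ‖d‖ ^ 2 ≤ 2 * Cf ^ 2 + 2 * μ₀ ^ 2 * Cg ^ 2) :
    2 * (Cf ^ 2 + μ₀ ^ 2 * Cg ^ 2) *
        (∫ ω, ‖(∑ i, lam i • (v i ω - w i)) + μ₀ • (g ω - w₀)‖ ^ 2 ∂μ) +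
      2 * Real.log m * (∫ ω, Finset.univ.sup'
        (Finset.univ_nonempty_iff.mpr (Fin.pos_iff_nonempty.mp (by omega)))
        (fun i => ⟪v i ω - w i, d⟫ ^ 2) ∂μ) ≤
      4 * (Cf ^ 2 + μ₀ ^ 2 * Cg ^ 2) *
        (δ ^ 2 + μ₀ ^ 2 * δ₀ ^ 2 + m * δ ^ 2 * Real.log m) := by
  obtain ⟨hlam0, hlam1⟩ := hlam
  have hS : (0:ℝ) ≤ Cf ^ 2 + μ₀ ^ 2 * Cg ^ 2 := by positivity
  have hm1 : (1:ℝ) ≤ (m:ℝ) := by exact_mod_cast Nat.one_le_of_lt hm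
  have hlog : 0 ≤ Real.log m := Real.log_nonneg hm1
  have hne : (Finset.univ : Finset (Fin m)).Nonempty :=
    Finset.univ_nonempty_iff.mpr (Fin.pos_iff_nonempty.mp (by omega))
  -- pointwise bound for the first integrand
  have key1 : ∀ ω, ‖(∑ i, lam i • (v i ω - w i)) + μ₀ • (g ω - w₀)‖ ^ 2
      ≤ 2 * ∑ i, lam i * ‖v i ω - w i‖ ^ 2 + 2 * μ₀ ^ 2 * ‖g ω - w₀‖ ^ 2 := by
    intro ω
    set a := ∑ i, lam i • (v i ω - w i) with ha
    set b := μ₀ • (g ω - w₀) with hb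
    have h1 : ‖a + b‖ ^ 2 ≤ 2 * ‖a‖ ^ 2 + 2 * ‖b‖ ^ 2 := by
      have hab := norm_add_le a b
      nlinarith [sq_nonneg (‖a‖ - ‖b‖), norm_nonneg a, norm_nonneg b, norm_nonneg (a + b)]
    have h2 : ‖a‖ ^ 2 ≤ ∑ i, lam i * ‖v i ω - w i‖ ^ 2 := by
      have hn : ‖a‖ ≤ ∑ i, lam i * ‖v i ω - w i‖ := by
        refine (norm_sum_le _ _).trans_eq ?_
        refine Finset.sum_congr rfl fun i _ => ?_
        rw [norm_smul, Real.norm_eq_abs, abs_of_nonneg (hlam0 i)]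
      have hcv : (∑ i, lam i * ‖v i ω - w i‖) ^ 2
          ≤ ∑ i, lam i * ‖v i ω - w i‖ ^ 2 := by
        have := (Even.convexOn_pow (even_two) :
            ConvexOn ℝ Set.univ fun x : ℝ => x ^ 2).map_sum_le
          (t := Finset.univ) (w := lam) (p := fun i => ‖v i ω - w i‖)
          (fun i _ => hlam0 i) hlam1 (fun i _ => Set.mem_univ _)
        simpa [smul_eq_mul] using this
      calc ‖a‖ ^ 2 ≤ (∑ i, lam i * ‖v i ω - w i‖) ^ 2 :=
            pow_le_pow_left₀ (norm_nonneg a) hn 2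
        _ ≤ _ := hcv
    have h3 : ‖b‖ ^ 2 = μ₀ ^ 2 * ‖g ω - w₀‖ ^ 2 := by
      rw [hb, norm_smul, Real.norm_eq_abs, mul_pow, sq_abs]
    nlinarith [h1, h2]
  have int_sum : Integrable (fun ω => ∑ i, lam i * ‖v i ω - w i‖ ^ 2) μ :=
    integrable_finset_sum _ (fun i _ => (hvar_int i).const_mul _)
  have int_rhs1 : Integrable
      (fun ω => 2 * ∑ i, lam i * ‖v i ω - w i‖ ^ 2 + 2 * μ₀ ^ 2 * ‖g ω - w₀‖ ^ 2) μ :=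
    (int_sum.const_mul 2).add (hgvar_int.const_mul _)
  have I1 : (∫ ω, ‖(∑ i, lam i • (v i ω - w i)) + μ₀ • (g ω - w₀)‖ ^ 2 ∂μ)
      ≤ 2 * δ ^ 2 + 2 * μ₀ ^ 2 * δ₀ ^ 2 := by
    have step : (∫ ω, ‖(∑ i, lam i • (v i ω - w i)) + μ₀ • (g ω - w₀)‖ ^ 2 ∂μ)
        ≤ ∫ ω, (2 * ∑ i, lam i * ‖v i ω - w i‖ ^ 2 + 2 * μ₀ ^ 2 * ‖g ω - w₀‖ ^ 2) ∂μ :=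
      integral_mono_of_nonneg (ae_of_all _ fun ω => by positivity) int_rhs1
        (ae_of_all _ key1)
    have eq1 : (∫ ω, (2 * ∑ i, lam i * ‖v i ω - w i‖ ^ 2
          + 2 * μ₀ ^ 2 * ‖g ω - w₀‖ ^ 2) ∂μ)
        = 2 * ∑ i, lam i * ∫ ω, ‖v i ω - w i‖ ^ 2 ∂μ
          + 2 * μ₀ ^ 2 * ∫ ω, ‖g ω - w₀‖ ^ 2 ∂μ := by
      rw [integral_add (int_sum.const_mul 2) (hgvar_int.const_mul _),
        integral_const_mul, integral_const_mul,
        integral_finset_sum _ (fun i _ => (hvar_int i).const_mul _)]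
      simp [integral_const_mul]
    have sum_le : ∑ i, lam i * ∫ ω, ‖v i ω - w i‖ ^ 2 ∂μ ≤ δ ^ 2 := by
      calc ∑ i, lam i * ∫ ω, ‖v i ω - w i‖ ^ 2 ∂μ ≤ ∑ i, lam i * δ ^ 2 :=
            Finset.sum_le_sum fun i _ => mul_le_mul_of_nonneg_left (hvar i) (hlam0 i)
        _ = δ ^ 2 := by rw [← Finset.sum_mul, hlam1, one_mul]
    have := eq1 ▸ step
    nlinarith [this, sum_le, hgvar, sq_nonneg μ₀]
  -- pointwise bound for the second integrand
  have key2 : ∀ ω, (Finset.univ.sup' hne (fun i => ⟪v i ω - w i, d⟫ ^ 2))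
      ≤ ∑ i, ‖d‖ ^ 2 * ‖v i ω - w i‖ ^ 2 := by
    intro ω
    refine Finset.sup'_le _ _ fun i _ => ?_
    have hcs : ⟪v i ω - w i, d⟫ ^ 2 ≤ ‖d‖ ^ 2 * ‖v i ω - w i‖ ^ 2 := by
      have h := abs_real_inner_le_norm (v i ω - w i) d
      have h2 : ⟪v i ω - w i, d⟫ ^ 2 ≤ (‖v i ω - w i‖ * ‖d‖) ^ 2 := by
        rw [← sq_abs]
        exact pow_le_pow_left₀ (abs_nonneg _) h 2
      nlinarith [h2]
    refine hcs.trans ?_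
    exact Finset.single_le_sum (f := fun j => ‖d‖ ^ 2 * ‖v j ω - w j‖ ^ 2)
      (fun j _ => by positivity) (Finset.mem_univ i)
  have int_rhs2 : Integrable (fun ω => ∑ i, ‖d‖ ^ 2 * ‖v i ω - w i‖ ^ 2) μ :=
    integrable_finset_sum _ (fun i _ => (hvar_int i).const_mul _)
  have sup_nonneg : ∀ ω, 0 ≤ Finset.univ.sup' hne (fun i => ⟪v i ω - w i, d⟫ ^ 2) := by
    intro ω
    obtain ⟨i, hi⟩ := hne
    exact (sq_nonneg ⟪v i ω - w i, d⟫).trans (Finset.le_sup' (fun j => ⟪v j ω - w j, d⟫ ^ 2) hi)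
  have I2 : (∫ ω, Finset.univ.sup' hne (fun i => ⟪v i ω - w i, d⟫ ^ 2) ∂μ)
      ≤ (2 * Cf ^ 2 + 2 * μ₀ ^ 2 * Cg ^ 2) * (m * δ ^ 2) := by
    have step : (∫ ω, Finset.univ.sup' hne (fun i => ⟪v i ω - w i, d⟫ ^ 2) ∂μ)
        ≤ ∫ ω, (∑ i, ‖d‖ ^ 2 * ‖v i ω - w i‖ ^ 2) ∂μ :=
      integral_mono_of_nonneg (ae_of_all _ sup_nonneg) int_rhs2 (ae_of_all _ key2)
    have eq2 : (∫ ω, (∑ i, ‖d‖ ^ 2 * ‖v i ω - w i‖ ^ 2) ∂μ)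
        = ∑ i, ‖d‖ ^ 2 * ∫ ω, ‖v i ω - w i‖ ^ 2 ∂μ := by
      rw [integral_finset_sum _ (fun i _ => (hvar_int i).const_mul _)]
      simp [integral_const_mul]
    have sum_le : ∑ i, ‖d‖ ^ 2 * ∫ ω, ‖v i ω - w i‖ ^ 2 ∂μ
        ≤ (2 * Cf ^ 2 + 2 * μ₀ ^ 2 * Cg ^ 2) * (m * δ ^ 2) := by
      calc ∑ i, ‖d‖ ^ 2 * ∫ ω, ‖v i ω - w i‖ ^ 2 ∂μ
          ≤ ∑ i : Fin m, (2 * Cf ^ 2 + 2 * μ₀ ^ 2 * Cg ^ 2) * δ ^ 2 := by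
            refine Finset.sum_le_sum fun i _ => ?_
            have h0 : (0:ℝ) ≤ ∫ ω, ‖v i ω - w i‖ ^ 2 ∂μ :=
              integral_nonneg fun ω => by positivity
            exact mul_le_mul hd (hvar i) h0 (by positivity)
        _ = (2 * Cf ^ 2 + 2 * μ₀ ^ 2 * Cg ^ 2) * (m * δ ^ 2) := by
            rw [Finset.sum_const, Finset.card_univ, Fintype.card_fin]
            push_cast; ring
    calc _ ≤ _ := step
      _ = _ := eq2
      _ ≤ _ := sum_le
  -- combine
  have hI1nn : (0:ℝ) ≤ ∫ ω, ‖(∑ i, lam i • (v i ω - w i)) + μ₀ • (g ω - w₀)‖ ^ 2 ∂μ :=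
    integral_nonneg fun ω => by positivity
  have hfin1 := mul_le_mul_of_nonneg_left I1 (by linarith : (0:ℝ) ≤ 2 * (Cf ^ 2 + μ₀ ^ 2 * Cg ^ 2))
  have hfin2 := mul_le_mul_of_nonneg_left I2 (by linarith : (0:ℝ) ≤ 2 * Real.log m)
  have hgoal2 : (∫ ω, Finset.univ.sup'
        (Finset.univ_nonempty_iff.mpr (Fin.pos_iff_nonempty.mp (by omega)))
        (fun i => ⟪v i ω - w i, d⟫ ^ 2) ∂μ)
      = ∫ ω, Finset.univ.sup' hne (fun i => ⟪v i ω - w i, d⟫ ^ 2) ∂μ := rfl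
  rw [hgoal2]
  nlinarith [hfin1, hfin2]
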